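/- arXiv:2503.05036 — 3 statements merged into one kernel-verified Lean document; each statement's English description precedes it below -/
import Mathlib

section
/- For all vectors a, b in H and all q ∈ [0,1], the q-numerical radius (computed on the Hilbert space H ⊕ H) of the block-diagonal operator T on H ⊕ H defined by T(x, y) = ((a⊗b)x, 0) = (⟨x,a⟩·b, 0) equals the q-numerical radius of a⊗b on H. -/
open scoped ComplexInnerProductSpace

/-- The rank-one operator `a ⊗ b` on a complex Hilbert space, acting by
`(a ⊗ b) x = ⟨x, a⟩ · b` (i.e. `x ↦ ⟪a, x⟫ • b` in Mathlib's convention, where the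
inner product is conjugate-linear in the first slot). -/
noncomputable def rankOne {H : Type*} [NormedAddCommGroup H] [InnerProductSpace ℂ H]
    (a b : H) : H →L[ℂ] H :=
  (innerSL ℂ a).smulRight b

/-- The `q`-numerical radius `ω_q(A) = sup { |⟨Ax, y⟩| : ‖x‖ = ‖y‖ = 1, ⟨x, y⟩ = q }`. -/
noncomputable def qRad {H : Type*} [NormedAddCommGroup H] [InnerProductSpace ℂ H]
    (q : ℝ) (A : H →L[ℂ] H) : ℝ :=
  sSup {r : ℝ | ∃ x y : H, ‖x‖ = 1 ∧ ‖y‖ = 1 ∧ ⟪x, y⟫ = (q : ℂ) ∧ r = ‖⟪A x, y⟫‖}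


section helperlemmas

lemma rcCast (x : ℝ) : (RCLike.ofReal x : ℂ) = (x : ℂ) := rfl

section generic
variable {K : Type*} [NormedAddCommGroup K] [InnerProductSpace ℂ K]

variable {K : Type*} [NormedAddCommGroup K] [InnerProductSpace ℂ K]

lemma upper_bound {q : ℝ} (hq0 : 0 ≤ q) (x y v : K)
    (hx : ‖x‖ = 1) (hy : ‖y‖ = 1) (hxy : ⟪x, y⟫ = (q : ℂ)) :
    ‖⟪v, y⟫‖ ≤ q * ‖⟪v, x⟫‖ +
      Real.sqrt (1 - q ^ 2) * Real.sqrt (‖v‖ ^ 2 - ‖⟪v, x⟫‖ ^ 2) := by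
  set γ : ℂ := ⟪x, v⟫ with hγ
  have hvx : ⟪v, x⟫ = (starRingEnd ℂ) γ := by rw [hγ, inner_conj_symm]
  have hxx : ⟪x, x⟫ = 1 := by
    rw [inner_self_eq_norm_sq_to_K, hx]; norm_num
  have hyx : ⟪y, x⟫ = (q : ℂ) := by
    rw [← inner_conj_symm, hxy]; simp
  have h0 : ⟪γ • x, y - (q : ℂ) • x⟫ = 0 := by
    rw [inner_smul_left, inner_sub_right, inner_smul_right, hxy, hxx]
    ring
  have hdec : ⟪v, y⟫ = (q : ℂ) * ⟪v, x⟫ + ⟪v - γ • x, y - (q : ℂ) • x⟫ := by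
    rw [inner_sub_left, h0, inner_sub_right, inner_smul_right]
    ring
  have hyq : ‖y - (q : ℂ) • x‖ ^ 2 = 1 - q ^ 2 := by
    have h := norm_sub_sq (𝕜 := ℂ) y ((q : ℂ) • x)
    rw [inner_smul_right, hyx] at h
    rw [h, hy, norm_smul, hx]
    simp [Complex.norm_real, ← Complex.ofReal_mul, abs_of_nonneg hq0]
    ring
  have hyq' : ‖y - (q : ℂ) • x‖ = Real.sqrt (1 - q ^ 2) := by
    rw [← hyq, Real.sqrt_sq (norm_nonneg _)]
  have hvγ : ‖v - γ • x‖ ^ 2 = ‖v‖ ^ 2 - ‖⟪v, x⟫‖ ^ 2 := by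
    have h1 : ⟪v, γ • x⟫ = γ * (starRingEnd ℂ) γ := by
      rw [inner_smul_right, hvx]
    have h := norm_sub_sq (𝕜 := ℂ) v (γ • x)
    rw [h1] at h
    rw [h, norm_smul, hx, hvx]
    have h2 : RCLike.re (γ * (starRingEnd ℂ) γ) = ‖γ‖ ^ 2 := by
      simp [Complex.mul_conj, Complex.normSq_eq_norm_sq, ← Complex.ofReal_pow]
    rw [h2]
    simp [RCLike.norm_conj]
    ring
  have hvγ' : ‖v - γ • x‖ = Real.sqrt (‖v‖ ^ 2 - ‖⟪v, x⟫‖ ^ 2) := by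
    rw [← hvγ, Real.sqrt_sq (norm_nonneg _)]
  calc ‖⟪v, y⟫‖ ≤ ‖(q : ℂ) * ⟪v, x⟫‖ + ‖⟪v - γ • x, y - (q : ℂ) • x⟫‖ := by
        rw [hdec]; exact norm_add_le _ _
    _ ≤ q * ‖⟪v, x⟫‖ + ‖v - γ • x‖ * ‖y - (q : ℂ) • x‖ := by
        rw [norm_mul, Complex.norm_real, Real.norm_eq_abs, abs_of_nonneg hq0]
        exact add_le_add_right (norm_inner_le_norm _ _) _
    _ = q * ‖⟪v, x⟫‖ + Real.sqrt (1 - q ^ 2) * Real.sqrt (‖v‖ ^ 2 - ‖⟪v, x⟫‖ ^ 2) := by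
        rw [hyq', hvγ']; ring

end generic

variable {H : Type*} [NormedAddCommGroup H] [InnerProductSpace ℂ H]

variable {H : Type*} [NormedAddCommGroup H] [InnerProductSpace ℂ H]

lemma rankOne_apply (a b x : H) : rankOne a b x = ⟪a, x⟫ • b := rfl

lemma inner_rankOne (a b x y : H) :
    ⟪rankOne a b x, y⟫ = (starRingEnd ℂ) ⟪a, x⟫ * ⟪b, y⟫ := by
  rw [rankOne_apply, inner_smul_left]

lemma norm_inner_rankOne (a b x y : H) :
    ‖⟪rankOne a b x, y⟫‖ = ‖⟪a, x⟫‖ * ‖⟪b, y⟫‖ := by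
  rw [inner_rankOne, norm_mul, RCLike.norm_conj]

lemma exists_unit_orth' [CompleteSpace H] (hdim : 2 ≤ Module.rank ℂ H) (v : H) :
    ∃ w : H, ‖w‖ = 1 ∧ ⟪v, w⟫ = 0 := by
  have hne : ((ℂ ∙ v)ᗮ : Submodule ℂ H) ≠ ⊥ := by
    intro h
    have htop : (ℂ ∙ v) = ⊤ := Submodule.orthogonal_eq_bot_iff.mp h
    have h1 : Module.rank ℂ H ≤ 1 := by
      have := rank_span_le (R := ℂ) ({v} : Set H)
      rw [htop] at this
      simpa using this
    exact absurd (hdim.trans h1) (by norm_num)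
  obtain ⟨w', hw'mem, hw'ne⟩ := Submodule.exists_mem_ne_zero_of_ne_bot hne
  refine ⟨((‖w'‖ : ℂ))⁻¹ • w', ?_, ?_⟩
  · rw [norm_smul, norm_inv, Complex.norm_real, norm_norm,
      inv_mul_cancel₀ (norm_ne_zero_iff.mpr hw'ne)]
  · rw [inner_smul_right]
    have : ⟪v, w'⟫ = 0 :=
      (Submodule.mem_orthogonal _ w').mp hw'mem v (Submodule.mem_span_singleton_self v)
    rw [this, mul_zero]

lemma exists_partner [CompleteSpace H] (hdim : 2 ≤ Module.rank ℂ H) {q : ℝ}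
    (hq0 : 0 ≤ q) (hq1 : q ≤ 1) (b x' : H) (hx' : ‖x'‖ = 1) :
    ∃ y' : H, ‖y'‖ = 1 ∧ ⟪x', y'⟫ = (q : ℂ) ∧
      ‖⟪b, y'⟫‖ = q * ‖⟪b, x'⟫‖ +
        Real.sqrt (1 - q ^ 2) * Real.sqrt (‖b‖ ^ 2 - ‖⟪b, x'⟫‖ ^ 2) := by
  set p : ℝ := Real.sqrt (1 - q ^ 2) with hp
  have h1q : (0:ℝ) ≤ 1 - q ^ 2 := by nlinarith
  have hp0 : 0 ≤ p := Real.sqrt_nonneg _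
  have hpq : q ^ 2 + p ^ 2 = 1 := by
    rw [hp, Real.sq_sqrt h1q]; ring
  set β : ℂ := ⟪x', b⟫ with hβ
  have hbx : ⟪b, x'⟫ = (starRingEnd ℂ) β := by rw [hβ, inner_conj_symm]
  have hnbx : ‖⟪b, x'⟫‖ = ‖β‖ := by rw [hbx, RCLike.norm_conj]
  have hxx : ⟪x', x'⟫ = 1 := by
    rw [inner_self_eq_norm_sq_to_K, hx']; norm_num
  set bp : H := b - β • x' with hbpdef
  have hxbp : ⟪x', bp⟫ = 0 := by
    rw [hbpdef, inner_sub_right, inner_smul_right, hxx, hβ]; ring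
  have h2 : ⟪b, β • x'⟫ = ((‖β‖ ^ 2 : ℝ) : ℂ) := by
    rw [inner_smul_right, hbx, RCLike.mul_conj]
    norm_cast
  have hbpsq : ‖bp‖ ^ 2 = ‖b‖ ^ 2 - ‖β‖ ^ 2 := by
    have h := norm_sub_sq (𝕜 := ℂ) b (β • x')
    rw [h2] at h
    rw [hbpdef, h, norm_smul, hx']
    simp [← Complex.ofReal_pow]
    ring
  have hbbp : ⟪b, bp⟫ = ((‖bp‖ ^ 2 : ℝ) : ℂ) := by
    have hr : (‖bp‖ ^ 2 : ℝ) = ‖b‖ ^ 2 - ‖β‖ ^ 2 := hbpsq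
    rw [hbpdef, inner_sub_right, h2, inner_self_eq_norm_sq_to_K, ← hbpdef, hr]
    simp only [rcCast]
    push_cast
    ring
  have hsqrt : Real.sqrt (‖b‖ ^ 2 - ‖β‖ ^ 2) = ‖bp‖ := by
    rw [← hbpsq, Real.sqrt_sq (norm_nonneg _)]
  set d₀ : ℂ := if β = 0 then 1 else (starRingEnd ℂ) β / ‖β‖ with hd₀
  have hd₀n : ‖d₀‖ = 1 := by
    rw [hd₀]
    split_ifs with h
    · simp
    · rw [norm_div, RCLike.norm_conj, Complex.norm_real, norm_norm,
        div_self (norm_ne_zero_iff.mpr h)]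
  have hd₀β : (starRingEnd ℂ) β = d₀ * (‖β‖ : ℂ) := by
    rw [hd₀]
    split_ifs with h
    · simp [h]
    · rw [div_mul_cancel₀]
      exact_mod_cast norm_ne_zero_iff.mpr h
  suffices hgen : ∀ Z : H, ‖Z‖ = 1 → ⟪x', Z⟫ = 0 → ⟪b, Z⟫ = d₀ * (‖bp‖ : ℂ) →
      ∃ y' : H, ‖y'‖ = 1 ∧ ⟪x', y'⟫ = (q : ℂ) ∧
        ‖⟪b, y'⟫‖ = q * ‖⟪b, x'⟫‖ +
          Real.sqrt (1 - q ^ 2) * Real.sqrt (‖b‖ ^ 2 - ‖⟪b, x'⟫‖ ^ 2) by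
    by_cases hbp : bp = 0
    · obtain ⟨Z, hZn, hZo⟩ := exists_unit_orth' hdim x'
      refine hgen Z hZn hZo ?_
      have hb' : b = β • x' := by
        have h3 := sub_eq_zero.mp (hbpdef ▸ hbp)
        exact h3
      rw [hbp]
      rw [hb', inner_smul_left, hZo]
      simp
    · have hbpne : ((‖bp‖ : ℂ)) ≠ 0 := by
        exact_mod_cast norm_ne_zero_iff.mpr hbp
      refine hgen ((d₀ * (‖bp‖ : ℂ)⁻¹) • bp) ?_ ?_ ?_
      · rw [norm_smul, norm_mul, hd₀n, norm_inv, Complex.norm_real, norm_norm,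
          one_mul, inv_mul_cancel₀ (norm_ne_zero_iff.mpr hbp)]
      · rw [inner_smul_right, hxbp, mul_zero]
      · rw [inner_smul_right, hbbp]
        push_cast
        field_simp
  intro Z hZn hZo hbZ
  refine ⟨(q : ℂ) • x' + (p : ℂ) • Z, ?_, ?_, ?_⟩
  · have hcross : ⟪(q : ℂ) • x', (p : ℂ) • Z⟫ = 0 := by
      rw [inner_smul_left, inner_smul_right, hZo]; ring
    have h := norm_add_sq (𝕜 := ℂ) ((q : ℂ) • x') ((p : ℂ) • Z)
    rw [hcross] at h
    have h4 : ‖(q : ℂ) • x' + (p : ℂ) • Z‖ ^ 2 = 1 := by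
      rw [h, norm_smul, norm_smul, hx', hZn]
      simp [Complex.norm_real, abs_of_nonneg hq0, abs_of_nonneg hp0]
      nlinarith
    nlinarith [norm_nonneg ((q : ℂ) • x' + (p : ℂ) • Z)]
  · rw [inner_add_right, inner_smul_right, inner_smul_right, hxx, hZo]
    ring
  · have hby : ⟪b, (q : ℂ) • x' + (p : ℂ) • Z⟫ = d₀ * ((q * ‖β‖ + p * ‖bp‖ : ℝ) : ℂ) := by
      rw [inner_add_right, inner_smul_right, inner_smul_right, hbx, hbZ, hd₀β]
      push_cast
      ring
    rw [hby, norm_mul, hd₀n, one_mul, Complex.norm_real, Real.norm_eq_abs,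
      abs_of_nonneg (by positivity), hnbx, hsqrt]

set_option maxHeartbeats 1000000 in
lemma exists_good_x [CompleteSpace H] (hdim : 2 ≤ Module.rank ℂ H) (a b : H) (hb : b ≠ 0)
    (x₁ : H) (hx₁ : ‖x₁‖ ≤ 1) :
    ∃ x' : H, ‖x'‖ = 1 ∧ ‖⟪x', b⟫‖ = ‖⟪x₁, b⟫‖ ∧ ‖⟪a, x₁⟫‖ ≤ ‖⟪a, x'⟫‖ := by
  have hbne : ((‖b‖ : ℂ)) ≠ 0 := by exact_mod_cast norm_ne_zero_iff.mpr hb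
  obtain ⟨f, hfn, hbf⟩ : ∃ f : H, ‖f‖ = 1 ∧ b = ((‖b‖ : ℂ)) • f := by
    refine ⟨((‖b‖ : ℂ))⁻¹ • b, ?_, ?_⟩
    · rw [norm_smul, norm_inv, Complex.norm_real, norm_norm,
        inv_mul_cancel₀ (norm_ne_zero_iff.mpr hb)]
    · rw [smul_inv_smul₀ hbne]
  have hff : ⟪f, f⟫ = 1 := by
    rw [inner_self_eq_norm_sq_to_K, hfn]; norm_num
  set w : ℝ := ‖⟪x₁, f⟫‖ with hwdef
  have hw0 : 0 ≤ w := norm_nonneg _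
  have hw1 : w ≤ 1 := by
    calc w ≤ ‖x₁‖ * ‖f‖ := norm_inner_le_norm _ _
      _ ≤ 1 := by rw [hfn, mul_one]; exact hx₁
  set sw : ℝ := Real.sqrt (1 - w ^ 2) with hswdef
  have hsw0 : 0 ≤ sw := Real.sqrt_nonneg _
  have hswsq : sw ^ 2 = 1 - w ^ 2 := Real.sq_sqrt (by nlinarith)
  clear_value w sw
  set z : ℂ := ⟪a, f⟫ with hzdef
  obtain ⟨c₀, hc₀n, hkey⟩ : ∃ c₀ : ℂ, ‖c₀‖ = 1 ∧ (starRingEnd ℂ) c₀ * z = ((‖z‖ : ℝ) : ℂ) := by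
    by_cases h : z = 0
    · exact ⟨1, by simp, by simp [h]⟩
    · refine ⟨z / ‖z‖, ?_, ?_⟩
      · rw [norm_div, Complex.norm_real, norm_norm, div_self (norm_ne_zero_iff.mpr h)]
      · rw [map_div₀, Complex.conj_ofReal, div_mul_eq_mul_div, RCLike.conj_mul]
        simp only [rcCast]
        rw [div_eq_iff (by exact_mod_cast norm_ne_zero_iff.mpr h)]
        push_cast
        ring
  have hfa : ⟪f, a⟫ = (starRingEnd ℂ) z := by rw [hzdef, inner_conj_symm]
  set g₀ : H := a - ⟪f, a⟫ • f with hg₀def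
  have ha2 : a = g₀ + ⟪f, a⟫ • f := by rw [hg₀def]; abel
  have hfg₀ : ⟪f, g₀⟫ = 0 := by
    rw [hg₀def, inner_sub_right, inner_smul_right, hff]; ring
  have hafz : ⟪a, ⟪f, a⟫ • f⟫ = ((‖z‖ ^ 2 : ℝ) : ℂ) := by
    rw [inner_smul_right, hfa, ← hzdef, mul_comm, RCLike.mul_conj]
    simp only [rcCast]
    norm_cast
  have hg₀sq : ‖g₀‖ ^ 2 = ‖a‖ ^ 2 - ‖z‖ ^ 2 := by
    have h := norm_sub_sq (𝕜 := ℂ) a (⟪f, a⟫ • f)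
    rw [hafz] at h
    rw [hg₀def, h, norm_smul, hfn, hfa, RCLike.norm_conj]
    simp [← Complex.ofReal_pow]
    ring
  clear_value z g₀
  have hdecG : ∀ u : H, ⟪a, u⟫ = ⟪g₀, u⟫ + (starRingEnd ℂ) (⟪f, a⟫) * ⟪f, u⟫ := by
    intro u
    have h9 : ⟪a, u⟫ = ⟪g₀ + ⟪f, a⟫ • f, u⟫ := by rw [← ha2]
    rw [h9, inner_add_left, inner_smul_left]
  obtain ⟨G, hGn, hGf, haG⟩ : ∃ G : H, ‖G‖ = 1 ∧ ⟪f, G⟫ = 0 ∧ ⟪a, G⟫ = ((‖g₀‖ : ℝ) : ℂ) := by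
    by_cases hg : g₀ = 0
    · obtain ⟨G, hGn, hGf⟩ := exists_unit_orth' hdim f
      refine ⟨G, hGn, hGf, ?_⟩
      rw [hdecG G, hg, hGf]
      simp
    · have hgne : ((‖g₀‖ : ℂ)) ≠ 0 := by exact_mod_cast norm_ne_zero_iff.mpr hg
      refine ⟨((‖g₀‖ : ℂ))⁻¹ • g₀, ?_, ?_, ?_⟩
      · rw [norm_smul, norm_inv, Complex.norm_real, norm_norm,
          inv_mul_cancel₀ (norm_ne_zero_iff.mpr hg)]
      · rw [inner_smul_right, hfg₀, mul_zero]
      · rw [inner_smul_right]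
        have hag : ⟪a, g₀⟫ = ((‖g₀‖ ^ 2 : ℝ) : ℂ) := by
          have hgg : ⟪g₀, g₀⟫ = ((‖g₀‖ ^ 2 : ℝ) : ℂ) := by
            rw [inner_self_eq_norm_sq_to_K]
            simp only [rcCast]
            norm_cast
          rw [hdecG g₀, hfg₀, hgg]
          ring
        rw [hag]
        push_cast
        field_simp
  clear hfg₀ hafz ha2
  set x' : H := ((w : ℂ) * (starRingEnd ℂ) c₀) • f + ((sw : ℂ)) • G with hx'def
  clear_value x'
  have hn1 : ‖((w : ℂ) * (starRingEnd ℂ) c₀) • f‖ = w := by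
    rw [norm_smul, hfn, norm_mul, RCLike.norm_conj, hc₀n, Complex.norm_real,
      Real.norm_eq_abs, abs_of_nonneg hw0]
    ring
  have hn2 : ‖((sw : ℂ)) • G‖ = sw := by
    rw [norm_smul, hGn, Complex.norm_real, Real.norm_eq_abs, abs_of_nonneg hsw0, mul_one]
  have hcross : ⟪((w : ℂ) * (starRingEnd ℂ) c₀) • f, ((sw : ℂ)) • G⟫ = 0 := by
    rw [inner_smul_left, inner_smul_right, hGf]; ring
  have hx'n : ‖x'‖ = 1 := by
    have h := norm_add_sq (𝕜 := ℂ) (((w : ℂ) * (starRingEnd ℂ) c₀) • f) (((sw : ℂ)) • G)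
    rw [hcross, hn1, hn2] at h
    have h4 : ‖x'‖ ^ 2 = 1 := by
      rw [hx'def, h]
      simp
      nlinarith
    nlinarith [norm_nonneg x']
  have hfb : ⟪f, b⟫ = ((‖b‖ : ℂ)) := by
    conv_lhs => rw [hbf]
    rw [inner_smul_right, hff, mul_one]
  have hGb : ⟪G, b⟫ = 0 := by
    conv_lhs => rw [hbf]
    rw [inner_smul_right, ← inner_conj_symm G f, hGf]
    simp
  have hx'b : ⟪x', b⟫ = (w : ℂ) * c₀ * ((‖b‖ : ℂ)) := by
    rw [hx'def, inner_add_left, inner_smul_left, inner_smul_left, hfb, hGb]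
    simp only [map_mul, Complex.conj_ofReal, Complex.conj_conj]
    ring
  have hx'bn : ‖⟪x', b⟫‖ = ‖⟪x₁, b⟫‖ := by
    have hxb : ⟪x₁, b⟫ = ((‖b‖ : ℂ)) * ⟪x₁, f⟫ := by
      conv_lhs => rw [hbf]
      rw [inner_smul_right]
    rw [hx'b, hxb, norm_mul, norm_mul, norm_mul, hc₀n, Complex.norm_real,
      Complex.norm_real, Real.norm_eq_abs, Real.norm_eq_abs, abs_of_nonneg hw0,
      abs_of_nonneg (norm_nonneg b), ← hwdef]
    ring
  have hax' : ⟪a, x'⟫ = ((w * ‖z‖ + sw * ‖g₀‖ : ℝ) : ℂ) := by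
    rw [hx'def, inner_add_right, inner_smul_right, inner_smul_right, haG, ← hzdef,
      mul_assoc, hkey]
    push_cast
    ring
  have hax'n : ‖⟪a, x'⟫‖ = w * ‖z‖ + sw * ‖g₀‖ := by
    rw [hax', Complex.norm_real, Real.norm_eq_abs,
      abs_of_nonneg (by positivity)]
  set xp : H := x₁ - ⟪f, x₁⟫ • f with hxpdef
  clear_value xp
  have hfxp : ⟪f, xp⟫ = 0 := by
    rw [hxpdef, inner_sub_right, inner_smul_right, hff]; ring
  have hdecomp : ⟪a, x₁⟫ = ⟪f, x₁⟫ * z + ⟪g₀, xp⟫ := by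
    have h1 : x₁ = ⟪f, x₁⟫ • f + xp := by rw [hxpdef]; abel
    have haxp : ⟪a, xp⟫ = ⟪g₀, xp⟫ := by
      rw [hdecG xp, hfxp]
      ring
    conv_lhs => rw [h1]
    rw [inner_add_right, inner_smul_right, ← hzdef, haxp]
  have hxpn : ‖xp‖ ≤ sw := by
    have h5 : ⟪x₁, ⟪f, x₁⟫ • f⟫ = ((w ^ 2 : ℝ) : ℂ) := by
      rw [inner_smul_right, ← inner_conj_symm x₁ f, RCLike.mul_conj, norm_inner_symm f x₁,
        ← hwdef]
      simp only [rcCast]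
      norm_cast
    have h := norm_sub_sq (𝕜 := ℂ) x₁ (⟪f, x₁⟫ • f)
    rw [h5] at h
    have h6 : ‖xp‖ ^ 2 = ‖x₁‖ ^ 2 - w ^ 2 := by
      rw [hxpdef, h, norm_smul, hfn, norm_inner_symm f x₁, ← hwdef]
      simp [← Complex.ofReal_pow]
      ring
    have h7 : ‖xp‖ ^ 2 ≤ sw ^ 2 := by
      rw [h6, hswsq]
      nlinarith [hx₁, norm_nonneg x₁]
    calc ‖xp‖ = Real.sqrt (‖xp‖ ^ 2) := (Real.sqrt_sq (norm_nonneg xp)).symm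
      _ ≤ Real.sqrt (sw ^ 2) := Real.sqrt_le_sqrt h7
      _ = sw := Real.sqrt_sq hsw0
  have hV : ‖⟪a, x₁⟫‖ ≤ w * ‖z‖ + sw * ‖g₀‖ := by
    calc ‖⟪a, x₁⟫‖ ≤ ‖⟪f, x₁⟫ * z‖ + ‖⟪g₀, xp⟫‖ := by
          rw [hdecomp]; exact norm_add_le _ _
      _ ≤ w * ‖z‖ + ‖g₀‖ * ‖xp‖ := by
          rw [norm_mul, norm_inner_symm f x₁, ← hwdef]
          exact add_le_add_right (norm_inner_le_norm _ _) _
      _ ≤ w * ‖z‖ + sw * ‖g₀‖ := by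
          have := mul_le_mul_of_nonneg_left hxpn (norm_nonneg g₀)
          nlinarith
  exact ⟨x', hx'n, hx'bn, hV.trans_eq hax'n.symm⟩

end helperlemmas

set_option maxHeartbeats 1000000

/-- The `q`-numerical radius of the block-diagonal operator `T(x, y) = ((a ⊗ b) x, 0)`
on `H ⊕ H` equals the `q`-numerical radius of `a ⊗ b` on `H`. -/
theorem stmt5 {H : Type*} [NormedAddCommGroup H] [InnerProductSpace ℂ H] [CompleteSpace H]
    (hdim : 2 ≤ Module.rank ℂ H) (a b : H) (q : ℝ) (hq : q ∈ Set.Icc (0 : ℝ) 1)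
    (T : WithLp 2 (H × H) →L[ℂ] WithLp 2 (H × H))
    (hT : ∀ x y : H,
      T ((WithLp.equiv 2 (H × H)).symm (x, y)) =
        (WithLp.equiv 2 (H × H)).symm ((rankOne a b) x, 0)) :
    qRad q T = qRad q (rankOne a b) := by
  obtain ⟨hq0, hq1⟩ := hq
  set p : ℝ := Real.sqrt (1 - q ^ 2) with hpdef
  have hp0 : 0 ≤ p := Real.sqrt_nonneg _
  set SA : Set ℝ := {r : ℝ | ∃ x y : H, ‖x‖ = 1 ∧ ‖y‖ = 1 ∧ ⟪x, y⟫ = (q : ℂ) ∧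
    r = ‖⟪rankOne a b x, y⟫‖} with hSA
  set ST : Set ℝ := {r : ℝ | ∃ X Y : WithLp 2 (H × H), ‖X‖ = 1 ∧ ‖Y‖ = 1 ∧
    ⟪X, Y⟫ = (q : ℂ) ∧ r = ‖⟪T X, Y⟫‖} with hST
  have hgoal : qRad q T = sSup ST ∧ qRad q (rankOne a b) = sSup SA := ⟨rfl, rfl⟩
  rw [hgoal.1, hgoal.2]
  -- basic facts about T
  have hTapp : ∀ X : WithLp 2 (H × H),
      T X = (WithLp.equiv 2 (H × H)).symm (rankOne a b ((WithLp.equiv 2 (H × H)) X).1, 0) := by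
    intro X
    have h := hT ((WithLp.equiv 2 (H × H)) X).1 ((WithLp.equiv 2 (H × H)) X).2
    rwa [Prod.mk.eta, Equiv.symm_apply_apply] at h
  have hTinner : ∀ X Y : WithLp 2 (H × H),
      ⟪T X, Y⟫ = ⟪rankOne a b ((WithLp.equiv 2 (H × H)) X).1,
        ((WithLp.equiv 2 (H × H)) Y).1⟫ := by
    intro X Y
    rw [hTapp X, WithLp.prod_inner_apply]
    rw [WithLp.equiv_symm_apply, WithLp.ofLp_toLp]
    simp [WithLp.equiv_apply]
  have hTnorm : ∀ X : WithLp 2 (H × H),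
      ‖T X‖ = ‖⟪a, ((WithLp.equiv 2 (H × H)) X).1⟫‖ * ‖b‖ := by
    intro X
    rw [hTapp X, WithLp.equiv_symm_apply, WithLp.norm_toLp_fst]
    show ‖⟪a, _⟫ • b‖ = _
    rw [norm_smul]
  have hfst : ∀ X : WithLp 2 (H × H), ‖X‖ = 1 → ‖((WithLp.equiv 2 (H × H)) X).1‖ ≤ 1 := by
    intro X hX
    have h := WithLp.prod_norm_sq_eq_of_L2 X
    rw [hX] at h
    rw [WithLp.equiv_apply, WithLp.ofLp_fst]
    nlinarith [norm_nonneg X.fst, norm_nonneg X.snd]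
  -- bounded above
  have hbddA : BddAbove SA := by
    refine ⟨‖a‖ * ‖b‖, ?_⟩
    rintro r ⟨x, y, hx, hy, hxy, rfl⟩
    rw [norm_inner_rankOne]
    have h1 := norm_inner_le_norm (𝕜 := ℂ) a x
    have h2 := norm_inner_le_norm (𝕜 := ℂ) b y
    rw [hx, mul_one] at h1
    rw [hy, mul_one] at h2
    exact mul_le_mul h1 h2 (norm_nonneg _) (norm_nonneg _)
  have hbddT : BddAbove ST := by
    refine ⟨‖a‖ * ‖b‖, ?_⟩
    rintro r ⟨X, Y, hX, hY, hXY, rfl⟩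
    rw [hTinner, norm_inner_rankOne]
    have h1 := norm_inner_le_norm (𝕜 := ℂ) a ((WithLp.equiv 2 (H × H)) X).1
    have h2 := norm_inner_le_norm (𝕜 := ℂ) b ((WithLp.equiv 2 (H × H)) Y).1
    have h3 := hfst X hX
    have h4 := hfst Y hY
    have h5 : ‖⟪a, ((WithLp.equiv 2 (H × H)) X).1⟫‖ ≤ ‖a‖ := by
      calc _ ≤ ‖a‖ * ‖((WithLp.equiv 2 (H × H)) X).1‖ := h1
        _ ≤ ‖a‖ * 1 := mul_le_mul_of_nonneg_left h3 (norm_nonneg a)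
        _ = ‖a‖ := mul_one _
    have h6 : ‖⟪b, ((WithLp.equiv 2 (H × H)) Y).1⟫‖ ≤ ‖b‖ := by
      calc _ ≤ ‖b‖ * ‖((WithLp.equiv 2 (H × H)) Y).1‖ := h2
        _ ≤ ‖b‖ * 1 := mul_le_mul_of_nonneg_left h4 (norm_nonneg b)
        _ = ‖b‖ := mul_one _
    exact mul_le_mul h5 h6 (norm_nonneg _) (norm_nonneg _)
  -- nonempty
  have hneA : SA.Nonempty := by
    obtain ⟨x₀, hx₀n, _⟩ := exists_unit_orth' hdim (0 : H)
    obtain ⟨y₀, hy₀n, hxy₀, _⟩ := exists_partner hdim hq0 hq1 b x₀ hx₀n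
    exact ⟨‖⟪rankOne a b x₀, y₀⟫‖, x₀, y₀, hx₀n, hy₀n, hxy₀, rfl⟩
  have hsub : SA ⊆ ST := by
    rintro r ⟨x, y, hx, hy, hxy, rfl⟩
    refine ⟨(WithLp.equiv 2 (H × H)).symm (x, 0), (WithLp.equiv 2 (H × H)).symm (y, 0),
      ?_, ?_, ?_, ?_⟩
    · rw [WithLp.equiv_symm_apply, WithLp.norm_toLp_fst]; exact hx
    · rw [WithLp.equiv_symm_apply, WithLp.norm_toLp_fst]; exact hy
    · simp only [WithLp.prod_inner_apply, WithLp.equiv_symm_apply, WithLp.ofLp_toLp,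
        inner_zero_left, add_zero]
      exact hxy
    · rw [hTinner]
      congr 2 <;> rw [Equiv.apply_symm_apply]
  have hneT : ST.Nonempty := hneA.mono hsub
  have hposA : ∀ r ∈ SA, 0 ≤ r := by
    rintro r ⟨x, y, _, _, _, rfl⟩
    exact norm_nonneg _
  refine le_antisymm ?_ (csSup_le_csSup hbddT hneA hsub)
  refine csSup_le hneT ?_
  rintro r ⟨X, Y, hX, hY, hXY, rfl⟩
  have hsupA0 : 0 ≤ sSup SA := by
    obtain ⟨r₀, hr₀⟩ := hneA
    exact le_trans (hposA r₀ hr₀) (le_csSup hbddA hr₀)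
  set x₁ : H := ((WithLp.equiv 2 (H × H)) X).1 with hx₁def
  have hx₁ : ‖x₁‖ ≤ 1 := hfst X hX
  set α : ℝ := ‖⟪a, x₁⟫‖ with hαdef
  set β : ℝ := ‖⟪b, x₁⟫‖ with hβdef
  have hα0 : 0 ≤ α := norm_nonneg _
  have hβ0 : 0 ≤ β := norm_nonneg _
  have hβb : β ≤ ‖b‖ := by
    calc β ≤ ‖b‖ * ‖x₁‖ := norm_inner_le_norm _ _
      _ ≤ ‖b‖ * 1 := mul_le_mul_of_nonneg_left hx₁ (norm_nonneg b)
      _ = ‖b‖ := mul_one _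
  have hTXX : ‖⟪T X, X⟫‖ = α * β := by
    rw [hTinner, norm_inner_rankOne, ← hx₁def, ← hαdef, ← hβdef]
  have hTXn : ‖T X‖ = α * ‖b‖ := by
    rw [hTnorm, ← hx₁def, ← hαdef]
  have h1 := upper_bound hq0 X Y (T X) hX hY hXY
  rw [hTXX, hTXn, ← hpdef] at h1
  have hsq : (α * ‖b‖) ^ 2 - (α * β) ^ 2 = α ^ 2 * (‖b‖ ^ 2 - β ^ 2) := by ring
  have hsqrt2 : Real.sqrt ((α * ‖b‖) ^ 2 - (α * β) ^ 2)
      = α * Real.sqrt (‖b‖ ^ 2 - β ^ 2) := by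
    rw [hsq, Real.sqrt_mul (sq_nonneg α), Real.sqrt_sq hα0]
  rw [hsqrt2] at h1
  have hbound : ‖⟪T X, Y⟫‖ ≤ α * (q * β + p * Real.sqrt (‖b‖ ^ 2 - β ^ 2)) := by
    calc ‖⟪T X, Y⟫‖ ≤ q * (α * β) + p * (α * Real.sqrt (‖b‖ ^ 2 - β ^ 2)) := h1
      _ = α * (q * β + p * Real.sqrt (‖b‖ ^ 2 - β ^ 2)) := by ring
  by_cases hb : b = 0
  · have hβ' : β = 0 := by rw [hβdef, hb, inner_zero_left, norm_zero]
    have : ‖⟪T X, Y⟫‖ ≤ 0 := by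
      rw [hβ', hb] at hbound
      simpa using hbound
    linarith
  · obtain ⟨x', hx'n, hx'b, hax⟩ := exists_good_x hdim a b hb x₁ hx₁
    obtain ⟨y', hy'n, hxy', hby'⟩ := exists_partner hdim hq0 hq1 b x' hx'n
    have hbx' : ‖⟪b, x'⟫‖ = β := by
      rw [norm_inner_symm, hx'b, ← norm_inner_symm, ← hβdef]
    have hc0 : 0 ≤ q * β + p * Real.sqrt (‖b‖ ^ 2 - β ^ 2) := by positivity
    have hval : ‖⟪rankOne a b x', y'⟫‖
        = ‖⟪a, x'⟫‖ * (q * β + p * Real.sqrt (‖b‖ ^ 2 - β ^ 2)) := by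
      rw [norm_inner_rankOne, hby', hbx', hpdef]
    have hmem : ‖⟪rankOne a b x', y'⟫‖ ∈ SA := ⟨x', y', hx'n, hy'n, hxy', rfl⟩
    calc ‖⟪T X, Y⟫‖ ≤ α * (q * β + p * Real.sqrt (‖b‖ ^ 2 - β ^ 2)) := hbound
      _ ≤ ‖⟪a, x'⟫‖ * (q * β + p * Real.sqrt (‖b‖ ^ 2 - β ^ 2)) :=
          mul_le_mul_of_nonneg_right hax hc0
      _ = ‖⟪rankOne a b x', y'⟫‖ := hval.symm
      _ ≤ sSup SA := le_csSup hbddA hmem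
end

section
/- For all vectors a, b in H with b ≠ 0 and all q ∈ [0,1], the q-numerical radius of a⊗b satisfies ω_q(a⊗b) = (‖a‖·‖b‖ + q·|⟨a,b⟩|)/2 + (√(1−q²)/2)·‖b‖·(inf over λ ∈ ℂ of ‖a − λ·b‖). -/
open scoped ComplexInnerProductSpace

set_option maxHeartbeats 1000000

section Helpers
variable {H : Type*} [NormedAddCommGroup H] [InnerProductSpace ℂ H]

private lemma key_ineq (al d q p v s r : ℝ) (hr : 0 ≤ r)
    (hqp : q^2 + p^2 = 1) (hr2 : r^2 = al^2 + d^2) :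
    2*((al*v+d*s)*(q*v+p*s)) ≤ (r + q*al + p*d) * (v^2+s^2) := by
  set X := d*p - al*q with hX
  set Y := al*p + d*q with hY
  have h1 : (r*(v^2+s^2))^2 - (X*(v^2-s^2) - 2*Y*v*s)^2 = (2*X*v*s + Y*(v^2-s^2))^2 := by
    rw [hX, hY]
    linear_combination ((v^2+s^2)^2) * hr2 - ((al^2+d^2)*(v^2+s^2)^2) * hqp
  have hA1 : 0 ≤ r*(v^2+s^2) := mul_nonneg hr (by positivity)
  have h2 : -(X*(v^2-s^2) - 2*Y*v*s) ≤ r*(v^2+s^2) := by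
    nlinarith [h1, sq_nonneg (2*X*v*s + Y*(v^2-s^2))]
  have h3 : (r + q*al + p*d) * (v^2+s^2) - 2*((al*v+d*s)*(q*v+p*s))
      = r*(v^2+s^2) + (X*(v^2-s^2) - 2*Y*v*s) := by rw [hX, hY]; ring
  linarith

private lemma exists_CS (al d q p r : ℝ) (hal : 0 ≤ al) (hd : 0 ≤ d) (hq : 0 ≤ q)
    (hp : 0 ≤ p) (hr : 0 ≤ r) (hqp : q^2+p^2 = 1) (hr2 : r^2 = al^2+d^2) :
    ∃ C S : ℝ, 0 ≤ C ∧ 0 ≤ S ∧ C^2+S^2 = 1 ∧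
      2*((al*C+d*S)*(q*C+p*S)) = r + q*al + p*d := by
  rcases eq_or_lt_of_le hr with h0 | h0
  · -- r = 0, hence al = d = 0
    have hal0 : al = 0 := by nlinarith
    have hd0 : d = 0 := by nlinarith
    exact ⟨q, p, hq, hp, hqp, by rw [hal0, hd0, ← h0]; ring⟩
  · set K := r + q*al + p*d with hK
    have hKpos : 0 < K := by nlinarith [mul_nonneg hq hal, mul_nonneg hp hd]
    have hT2 : (0:ℝ) < 2*r*K := by positivity
    set T := Real.sqrt (2*r*K) with hT
    have hTpos : 0 < T := Real.sqrt_pos.2 hT2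
    have hTsq : T^2 = 2*r*K := Real.sq_sqrt (le_of_lt hT2)
    refine ⟨(al+q*r)/T, (d+p*r)/T, by positivity, by positivity, ?_, ?_⟩
    · field_simp
      rw [hTsq]
      ring_nf
      nlinarith [hr2, hqp]
    · have hTT : T*T = 2*r*K := by rw [← hTsq]; ring
      field_simp
      rw [hTsq, hK]
      linear_combination (-2*(q*al+p*d+r))*hr2 + (2*r*(al^2+d^2+r*(q*al+p*d)))*hqp



private lemma pyth (u w : H) (h : ⟪u, w⟫ = 0) : ‖u + w‖^2 = ‖u‖^2 + ‖w‖^2 := by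
  rw [norm_add_sq (𝕜 := ℂ), h]; simp

private lemma pointwise_bound (a b x y : H) (al d q p B : ℝ) (lam : ℂ)
    (hB : ‖b‖ = B) (hBpos : 0 < B)
    (hal : ‖lam‖ * B = al) (hdd : ‖a - lam • b‖ = d)
    (horth : ⟪b, a - lam • b⟫ = 0)
    (hq : 0 ≤ q) (hp : 0 ≤ p) (hqp : q^2 + p^2 = 1)
    (hx : ‖x‖ = 1) (hy : ‖y‖ = 1) (hxy : ⟪x, y⟫ = (q : ℂ)) :
    ‖⟪x, a⟫ * ⟪b, y⟫‖ * 2 ≤ B * (‖a‖ + q * al + p * d) := by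
  have hal0 : 0 ≤ al := by rw [← hal]; positivity
  have hd0 : 0 ≤ d := by rw [← hdd]; positivity
  have hadec : a = lam • b + (a - lam • b) := by abel
  have hr2 : ‖a‖^2 = al^2 + d^2 := by
    have h0 : ⟪lam • b, a - lam • b⟫ = 0 := by
      rw [inner_smul_left, horth, mul_zero]
    have := pyth (lam • b) (a - lam • b) h0
    rw [← hadec, norm_smul, hB, hdd] at this
    rw [this, ← hal]
  have hr0 : (0:ℝ) ≤ ‖a‖ := norm_nonneg a
  set v := ‖⟪x, b⟫‖ with hv
  set b' := b - ⟪x, b⟫ • x with hb'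
  set s := ‖b'‖ with hs
  have hv0 : 0 ≤ v := norm_nonneg _
  have hs0 : 0 ≤ s := norm_nonneg _
  have hxb' : ⟪x, b'⟫ = 0 := by
    rw [hb', inner_sub_right, inner_smul_right, inner_self_eq_norm_sq_to_K, hx]
    simp
  have hvs : v^2 + s^2 = B^2 := by
    have h0 : ⟪⟪x, b⟫ • x, b'⟫ = 0 := by rw [inner_smul_left, hxb', mul_zero]
    have := pyth (⟪x, b⟫ • x) b' h0
    have hdec : ⟪x, b⟫ • x + b' = b := by rw [hb']; abel
    rw [hdec, norm_smul, hx, hB] at this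
    rw [hv, hs]
    rw [this]; ring
  set c : ℂ := ⟪b, x⟫ / ((B:ℂ)^2) with hc
  set x' := x - c • b with hx'
  have hB2ne : ((B:ℂ))^2 ≠ 0 := by
    simp [Complex.ofReal_ne_zero]
    exact ne_of_gt hBpos
  have hbx' : ⟪b, x'⟫ = 0 := by
    rw [hx', inner_sub_right, inner_smul_right, inner_self_eq_norm_sq_to_K, hB, hc]
    field_simp
    exact mul_eq_zero_of_right _ (sub_eq_zero.mpr (div_self hB2ne).symm)
  have hcB : ‖c‖ * B^2 = v := by
    rw [hc, hv, norm_div, norm_inner_symm b x]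
    have : ‖((B:ℂ))^2‖ = B^2 := by
      rw [norm_pow, Complex.norm_real, Real.norm_eq_abs, abs_of_pos hBpos]
    rw [this]
    field_simp
  have hxnorm : B * ‖x'‖ = s := by
    have h0 : ⟪c • b, x'⟫ = 0 := by rw [inner_smul_left, hbx', mul_zero]
    have h1 := pyth (c • b) x' h0
    have hdec : c • b + x' = x := by rw [hx']; abel
    rw [hdec, norm_smul, hx, hB] at h1
    have hcB2 : v^2 = ‖c‖^2*(B^2)^2 := by rw [← hcB]; ring
    have hsq : (B * ‖x'‖)^2 = s^2 := by
      linear_combination (-(B^2))*h1 - hvs + hcB2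
    rw [← Real.sqrt_sq (by positivity : (0:ℝ) ≤ B*‖x'‖), hsq, Real.sqrt_sq hs0]
  have hua : ‖⟪x, a⟫‖ * B ≤ al * v + d * s := by
    have hxa' : ⟪x', a - lam • b⟫ = ⟪x, a - lam • b⟫ := by
      rw [hx', inner_sub_left, inner_smul_left, horth, mul_zero, sub_zero]
    have hsplit : ⟪x, a⟫ = lam * ⟪x, b⟫ + ⟪x', a - lam • b⟫ := by
      conv_lhs => rw [hadec]
      rw [inner_add_right, inner_smul_right, hxa']
    have h2 : ‖⟪x, a⟫‖ ≤ ‖lam‖ * v + ‖x'‖ * d := by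
      calc ‖⟪x, a⟫‖ ≤ ‖lam * ⟪x, b⟫‖ + ‖⟪x', a - lam • b⟫‖ := by
            rw [hsplit]; exact norm_add_le _ _
        _ ≤ ‖lam‖ * v + ‖x'‖ * d := by
            have h3 : ‖lam * ⟪x, b⟫‖ = ‖lam‖ * v := by rw [norm_mul, hv]
            have h4 : ‖⟪x', a - lam • b⟫‖ ≤ ‖x'‖ * d := by
              rw [← hdd]; exact norm_inner_le_norm _ _
            linarith
    calc ‖⟪x, a⟫‖ * B ≤ (‖lam‖ * v + ‖x'‖ * d) * B :=
          mul_le_mul_of_nonneg_right h2 hBpos.le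
      _ = al * v + d * (B * ‖x'‖) := by rw [← hal]; ring
      _ = al * v + d * s := by rw [hxnorm]
  set w := y - (q:ℂ) • x with hw
  have hxw : ⟪x, w⟫ = 0 := by
    rw [hw, inner_sub_right, inner_smul_right, inner_self_eq_norm_sq_to_K, hx, hxy]
    simp
  have hwn : ‖w‖ = p := by
    have hyx : ⟪y, x⟫ = (q:ℂ) := by
      rw [← inner_conj_symm y x, hxy, Complex.conj_ofReal]
    have h1 := norm_sub_sq (𝕜 := ℂ) y ((q:ℂ) • x)
    rw [← hw, inner_smul_right, hyx] at h1
    simp [norm_smul, hx, hy] at h1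
    have h2 : ‖w‖^2 = p^2 := by rw [h1]; nlinarith [hqp]
    rw [← Real.sqrt_sq (norm_nonneg w), h2, Real.sqrt_sq hp]
  have hby : ‖⟪b, y⟫‖ ≤ q * v + p * s := by
    have hbw : ⟪b', w⟫ = ⟪b, w⟫ := by
      rw [hb', inner_sub_left, inner_smul_left, hxw, mul_zero, sub_zero]
    have hydec : y = (q:ℂ) • x + w := by rw [hw]; abel
    have hsplit : ⟪b, y⟫ = (q:ℂ) * ⟪b, x⟫ + ⟪b', w⟫ := by
      conv_lhs => rw [hydec]
      rw [inner_add_right, inner_smul_right, hbw]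
    calc ‖⟪b, y⟫‖ ≤ ‖(q:ℂ) * ⟪b, x⟫‖ + ‖⟪b', w⟫‖ := by
          rw [hsplit]; exact norm_add_le _ _
      _ ≤ q * v + p * s := by
          have h2 : ‖(q:ℂ) * ⟪b, x⟫‖ = q * v := by
            rw [norm_mul, Complex.norm_real, Real.norm_eq_abs, abs_of_nonneg hq,
              norm_inner_symm b x]
          have h3 : ‖⟪b', w⟫‖ ≤ s * p := by
            calc ‖⟪b', w⟫‖ ≤ ‖b'‖ * ‖w‖ := norm_inner_le_norm _ _
              _ = s * p := by rw [hwn]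
          linarith
  have hkey := key_ineq al d q p v s ‖a‖ hr0 hqp hr2
  rw [hvs] at hkey
  have hprod : ‖⟪x, a⟫ * ⟪b, y⟫‖ * B ≤ (al*v + d*s) * (q*v + p*s) := by
    rw [norm_mul]
    calc ‖⟪x, a⟫‖ * ‖⟪b, y⟫‖ * B = (‖⟪x, a⟫‖ * B) * ‖⟪b, y⟫‖ := by ring
      _ ≤ (al*v + d*s) * (q*v + p*s) := by
          apply mul_le_mul hua hby (norm_nonneg _)
          positivity
  have hfin : ‖⟪x, a⟫ * ⟪b, y⟫‖ * 2 * B ≤ B * (‖a‖ + q * al + p * d) * B := by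
    nlinarith [hprod, hkey]
  exact le_of_mul_le_mul_right hfin hBpos



private lemma unit_self (w : H) (hw : w ≠ 0) :
    ⟪(‖w‖:ℂ)⁻¹ • w, (‖w‖:ℂ)⁻¹ • w⟫ = 1 := by
  have hc : ((‖w‖:ℂ)) ≠ 0 := by
    simp [Complex.ofReal_ne_zero]; exact hw
  rw [inner_smul_left, inner_smul_right, inner_self_eq_norm_sq_to_K, map_inv₀,
    Complex.conj_ofReal, sq]
  field_simp
  rfl

private lemma unit_inner (w : H) (hw : w ≠ 0) :
    ⟪(‖w‖:ℂ)⁻¹ • w, w⟫ = (‖w‖:ℂ) := by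
  have hc : ((‖w‖:ℂ)) ≠ 0 := by
    simp [Complex.ofReal_ne_zero]; exact hw
  rw [inner_smul_left, inner_self_eq_norm_sq_to_K, map_inv₀, Complex.conj_ofReal, sq]
  field_simp
  rfl

private lemma exists_e2 (b w : H) (hb : b ≠ 0) (hdim : 2 ≤ Module.rank ℂ H)
    (hbw : ⟪b, w⟫ = 0) :
    ∃ e₂ : H, ⟪e₂, e₂⟫ = 1 ∧ ⟪b, e₂⟫ = 0 ∧ ⟪e₂, w⟫ = (‖w‖ : ℂ) := by
  by_cases hw : w = 0
  · have hv : ∃ v : H, v ∉ Submodule.span ℂ {b} := by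
      by_contra hcon
      push_neg at hcon
      have htop : Submodule.span ℂ ({b} : Set H) = ⊤ := by
        rw [Submodule.eq_top_iff']; exact hcon
      have h1 : Module.rank ℂ H ≤ 1 := by
        have := rank_span_le (R := ℂ) (M := H) ({b} : Set H)
        rw [htop] at this
        simpa using this
      have := le_trans hdim h1
      norm_num at this
    obtain ⟨v, hv⟩ := hv
    set v' := v - (⟪b, v⟫ / ((‖b‖:ℂ)^2)) • b with hv'
    have hbne : ((‖b‖:ℂ))^2 ≠ 0 := by
      simp [Complex.ofReal_ne_zero]
      exact hb
    have hbv' : ⟪b, v'⟫ = 0 := by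
      rw [hv', inner_sub_right, inner_smul_right, inner_self_eq_norm_sq_to_K]
      field_simp
      exact mul_eq_zero_of_right _ (sub_eq_zero.mpr (div_self hbne).symm)
    have hv'ne : v' ≠ 0 := by
      intro h
      apply hv
      have : v = (⟪b, v⟫ / ((‖b‖:ℂ)^2)) • b := by
        rw [hv'] at h
        linear_combination (norm := module) h
      rw [this]
      exact Submodule.smul_mem _ _ (Submodule.mem_span_singleton_self b)
    refine ⟨(‖v'‖:ℂ)⁻¹ • v', unit_self v' hv'ne, ?_, ?_⟩
    · rw [inner_smul_right, hbv', mul_zero]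
    · rw [hw]; simp
  · refine ⟨(‖w‖:ℂ)⁻¹ • w, unit_self w hw, ?_, unit_inner w hw⟩
    rw [inner_smul_right, hbw, mul_zero]

private lemma exists_phase (μ : ℂ) :
    ∃ u : ℂ, (starRingEnd ℂ) u * u = 1 ∧ (starRingEnd ℂ) u * μ = (‖μ‖ : ℂ) := by
  by_cases hμ : μ = 0
  · exact ⟨1, by simp, by simp [hμ]⟩
  · have hn : (‖μ‖:ℂ) ≠ 0 := by
      simp [Complex.ofReal_ne_zero]; exact hμ
    have key : (starRingEnd ℂ) μ * μ = ((‖μ‖:ℂ))^2 := by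
      rw [mul_comm, Complex.mul_conj]
      norm_cast
      rw [← Complex.sq_norm]
    refine ⟨μ / (‖μ‖:ℂ), ?_, ?_⟩
    · rw [map_div₀, Complex.conj_ofReal, div_mul_div_comm, key, sq]
      have habs : ((‖μ‖ : ℝ):ℂ) ≠ 0 := by
        simpa using hn
      field_simp
    · rw [map_div₀, Complex.conj_ofReal, div_mul_eq_mul_div, key, sq]
      field_simp



private lemma pyth' (u w : H) (h : ⟪u, w⟫ = 0) : ‖u + w‖^2 = ‖u‖^2 + ‖w‖^2 := by
  rw [norm_add_sq (𝕜 := ℂ), h]; simp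

private lemma norm_eq_one_of_inner (x : H) (h : ⟪x, x⟫ = 1) : ‖x‖ = 1 := by
  have h2 : ‖x‖^2 = 1 := by
    rw [← inner_self_eq_norm_sq (𝕜 := ℂ), h]
    simp
  rw [← Real.sqrt_sq (norm_nonneg x), h2, Real.sqrt_one]

private lemma inf_dist (a b : H) (lam : ℂ)
    (horth : ⟪b, a - lam • b⟫ = 0) :
    (⨅ c : ℂ, ‖a - c • b‖) = ‖a - lam • b‖ := by
  apply le_antisymm
  · exact ciInf_le ⟨0, by rintro _ ⟨c, rfl⟩; positivity⟩ lam
  · apply le_ciInf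
    intro c
    have horth' : ⟪(lam - c) • b, a - lam • b⟫ = 0 := by
      rw [inner_smul_left, horth, mul_zero]
    have h1 := pyth' ((lam - c) • b) (a - lam • b) horth'
    have h2 : (lam - c) • b + (a - lam • b) = a - c • b := by
      rw [sub_smul]; abel
    rw [h2] at h1
    nlinarith [h1, norm_nonneg (a - c • b), norm_nonneg ((lam - c) • b),
      norm_nonneg (a - lam • b)]

private lemma witness (a b : H) (al d q p B r : ℝ) (e₁ e₂ : H) (u : ℂ)
    (he1 : ⟪e₁, e₁⟫ = 1) (he2 : ⟪e₂, e₂⟫ = 1) (h12 : ⟪e₁, e₂⟫ = 0)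
    (hb1 : ⟪b, e₁⟫ = (B:ℂ)) (hb2 : ⟪b, e₂⟫ = 0)
    (hu : (starRingEnd ℂ) u * u = 1) (hμ : (starRingEnd ℂ) u * ⟪e₁, a⟫ = (al:ℂ))
    (hea : ⟪e₂, a⟫ = (d:ℂ))
    (C S : ℝ) (hC : 0 ≤ C) (hS : 0 ≤ S) (hCS : C^2 + S^2 = 1)
    (hq : 0 ≤ q) (hp : 0 ≤ p) (hqp : q^2 + p^2 = 1)
    (hal0 : 0 ≤ al) (hd0 : 0 ≤ d) (hB0 : 0 ≤ B)
    (hval : 2*((al*C + d*S)*(q*C + p*S)) = r + q*al + p*d) :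
    ∃ x y : H, ‖x‖ = 1 ∧ ‖y‖ = 1 ∧ ⟪x, y⟫ = (q:ℂ) ∧
      ‖⟪x, a⟫ * ⟪b, y⟫‖ * 2 = B * (r + q*al + p*d) := by
  have h21 : ⟪e₂, e₁⟫ = 0 := by rw [← inner_conj_symm e₂ e₁, h12, map_zero]
  set x := ((C:ℂ) * u) • e₁ + (S:ℂ) • e₂ with hxdef
  set z := (-(S:ℂ) * u) • e₁ + (C:ℂ) • e₂ with hzdef
  set y := (q:ℂ) • x - (p:ℂ) • z with hydef
  have hxx : ⟪x, x⟫ = 1 := by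
    rw [hxdef]
    simp only [inner_add_left, inner_add_right, inner_smul_left, inner_smul_right,
      he1, he2, h12, h21, map_mul, Complex.conj_ofReal, mul_zero, mul_one, zero_mul,
      add_zero, zero_add]
    have : ((C:ℂ))^2 + ((S:ℂ))^2 = 1 := by exact_mod_cast hCS
    linear_combination (C:ℂ)^2 * hu + this
  have hzz : ⟪z, z⟫ = 1 := by
    rw [hzdef]
    simp only [inner_add_left, inner_add_right, inner_smul_left, inner_smul_right,
      he1, he2, h12, h21, map_mul, map_neg, Complex.conj_ofReal, mul_zero, mul_one,
      zero_mul, add_zero, zero_add, neg_mul, neg_neg]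
    have : ((C:ℂ))^2 + ((S:ℂ))^2 = 1 := by exact_mod_cast hCS
    linear_combination (S:ℂ)^2 * hu + this
  have hxz : ⟪x, z⟫ = 0 := by
    rw [hxdef, hzdef]
    simp only [inner_add_left, inner_add_right, inner_smul_left, inner_smul_right,
      he1, he2, h12, h21, map_mul, map_neg, Complex.conj_ofReal, mul_zero, mul_one,
      zero_mul, add_zero, zero_add, neg_mul]
    linear_combination (-(C:ℂ)*(S:ℂ)) * hu
  have hzx : ⟪z, x⟫ = 0 := by rw [← inner_conj_symm z x, hxz, map_zero]
  have hxy : ⟪x, y⟫ = (q:ℂ) := by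
    rw [hydef, inner_sub_right, inner_smul_right, inner_smul_right, hxx, hxz]
    simp
  have hyy : ⟪y, y⟫ = 1 := by
    rw [hydef]
    simp only [inner_sub_left, inner_sub_right, inner_smul_left, inner_smul_right,
      hxx, hzz, hxz, hzx, Complex.conj_ofReal, mul_zero, mul_one, sub_zero]
    have : ((q:ℂ))^2 + ((p:ℂ))^2 = 1 := by exact_mod_cast hqp
    linear_combination this
  have hxa : ⟪x, a⟫ = ((C*al + S*d : ℝ):ℂ) := by
    rw [hxdef]
    simp only [inner_add_left, inner_smul_left, map_mul, Complex.conj_ofReal, hea]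
    push_cast
    linear_combination (C:ℂ) * hμ
  have hbx : ⟪b, x⟫ = (C:ℂ) * u * (B:ℂ) := by
    rw [hxdef, inner_add_right, inner_smul_right, inner_smul_right, hb1, hb2]
    ring
  have hbz : ⟪b, z⟫ = -(S:ℂ) * u * (B:ℂ) := by
    rw [hzdef, inner_add_right, inner_smul_right, inner_smul_right, hb1, hb2]
    ring
  have hby : ⟪b, y⟫ = u * ((B*(q*C + p*S) : ℝ):ℂ) := by
    rw [hydef, inner_sub_right, inner_smul_right, inner_smul_right, hbx, hbz]
    push_cast
    ring
  have hunorm : ‖u‖ = 1 := by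
    have h1 : Complex.normSq u = 1 := by
      have := hu
      rw [mul_comm, Complex.mul_conj] at this
      exact_mod_cast this
    have h2 : ‖u‖^2 = 1 := by rw [Complex.sq_norm]; exact h1
    rw [← Real.sqrt_sq (norm_nonneg u), h2, Real.sqrt_one]
  refine ⟨x, y, norm_eq_one_of_inner x hxx, norm_eq_one_of_inner y hyy, hxy, ?_⟩
  rw [hxa, hby]
  rw [norm_mul, norm_mul, hunorm, Complex.norm_real, Complex.norm_real, one_mul]
  rw [Real.norm_eq_abs, Real.norm_eq_abs]
  have h1 : 0 ≤ C*al + S*d := by positivity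
  have h2 : 0 ≤ B*(q*C + p*S) := by positivity
  rw [abs_of_nonneg h1, abs_of_nonneg h2]
  linear_combination B * hval

end Helpers

private lemma rankOne_inner {H : Type*} [NormedAddCommGroup H] [InnerProductSpace ℂ H]
    (a b x y : H) : ⟪(rankOne a b) x, y⟫ = ⟪x, a⟫ * ⟪b, y⟫ := by
  have h1 : (rankOne a b) x = ⟪a, x⟫ • b := by
    simp [rankOne]
  rw [h1, inner_smul_left, inner_conj_symm]

/-- The `q`-numerical radius of `a ⊗ b` expressed via the distance from `a` to the
span of `b`. -/
theorem stmt13 {H : Type*} [NormedAddCommGroup H] [InnerProductSpace ℂ H] [CompleteSpace H]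
    (hdim : 2 ≤ Module.rank ℂ H) (a b : H) (hb : b ≠ 0)
    (q : ℝ) (hq : q ∈ Set.Icc (0 : ℝ) 1) :
    qRad q (rankOne a b) =
      (‖a‖ * ‖b‖ + q * ‖⟪a, b⟫‖) / 2 +
        (Real.sqrt (1 - q ^ 2) / 2) * ‖b‖ * (⨅ c : ℂ, ‖a - c • b‖) := by
  obtain ⟨hq0, hq1⟩ := hq
  set B := ‖b‖ with hB
  have hBpos : 0 < B := norm_pos_iff.mpr hb
  set p := Real.sqrt (1 - q^2) with hpdef
  have h1q : 0 ≤ 1 - q^2 := by nlinarith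
  have hp0 : 0 ≤ p := Real.sqrt_nonneg _
  have hp2 : p^2 = 1 - q^2 := Real.sq_sqrt h1q
  have hqp : q^2 + p^2 = 1 := by rw [hp2]; ring
  set lam : ℂ := ⟪b, a⟫ / ((B:ℂ)^2) with hlam
  have hB2ne : ((B:ℂ))^2 ≠ 0 := by
    simp [Complex.ofReal_ne_zero, hB]
    exact hb
  have horth : ⟪b, a - lam • b⟫ = 0 := by
    rw [inner_sub_right, inner_smul_right, inner_self_eq_norm_sq_to_K, ← hB, hlam]
    field_simp
    exact mul_eq_zero_of_right _ (sub_eq_zero.mpr (div_self hB2ne).symm)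
  set d := ‖a - lam • b‖ with hd
  set al := ‖lam‖ * B with hal
  have hal0 : 0 ≤ al := by rw [hal]; positivity
  have hd0 : 0 ≤ d := norm_nonneg _
  have hinf : (⨅ c : ℂ, ‖a - c • b‖) = d := inf_dist a b lam horth
  have hba : ⟪b, a⟫ = lam * ((B:ℂ))^2 := by
    rw [hlam]; field_simp
    rw [mul_div_assoc, div_self (Complex.ofReal_ne_zero.mpr hBpos.ne'), mul_one]
  have hab : ‖⟪a, b⟫‖ = al * B := by
    rw [norm_inner_symm a b, hba, norm_mul, hal]
    have : ‖((B:ℂ))^2‖ = B^2 := by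
      rw [norm_pow, Complex.norm_real, Real.norm_eq_abs, abs_of_pos hBpos]
    rw [this]; ring
  have hr2 : ‖a‖^2 = al^2 + d^2 := by
    have h0 : ⟪lam • b, a - lam • b⟫ = 0 := by
      rw [inner_smul_left, horth, mul_zero]
    have h1 := pyth' (lam • b) (a - lam • b) h0
    have h2 : lam • b + (a - lam • b) = a := by abel
    rw [h2, norm_smul, ← hB, ← hd] at h1
    rw [h1, hal]
  set M := B * (‖a‖ + q * al + p * d) / 2 with hM
  have hM0 : 0 ≤ M := by
    rw [hM]
    have : 0 ≤ ‖a‖ + q * al + p * d :=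
      add_nonneg (add_nonneg (norm_nonneg a) (mul_nonneg hq0 hal0)) (mul_nonneg hp0 hd0)
    positivity
  -- the upper bound
  have hub : ∀ rr ∈ {r : ℝ | ∃ x y : H, ‖x‖ = 1 ∧ ‖y‖ = 1 ∧ ⟪x, y⟫ = (q : ℂ) ∧
      r = ‖⟪(rankOne a b) x, y⟫‖}, rr ≤ M := by
    rintro rr ⟨x, y, hx, hy, hxy, hrr⟩
    have hbd := pointwise_bound a b x y al d q p B lam hB.symm hBpos hal.symm hd.symm
      horth hq0 hp0 hqp hx hy hxy
    rw [hrr, rankOne_inner, hM]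
    linarith
  -- the witness
  obtain ⟨C, S, hC, hS, hCS, hval⟩ :=
    exists_CS al d q p ‖a‖ hal0 hd0 hq0 hp0 (norm_nonneg a) hqp hr2
  obtain ⟨e₂, he2, hbe2, he2w⟩ := exists_e2 b (a - lam • b) hb hdim horth
  set e₁ : H := (‖b‖:ℂ)⁻¹ • b with he1def
  have he1 : ⟪e₁, e₁⟫ = 1 := unit_self b hb
  have hb1 : ⟪b, e₁⟫ = (B:ℂ) := by
    rw [he1def, inner_smul_right, inner_self_eq_norm_sq_to_K, ← hB, sq]
    field_simp
    rw [sq, mul_div_assoc]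
    exact (congrArg (fun t => (B:ℂ) * t) (div_self (Complex.ofReal_ne_zero.mpr hBpos.ne'))).trans (mul_one _)
  have h12 : ⟪e₁, e₂⟫ = 0 := by
    rw [he1def, inner_smul_left, hbe2, mul_zero]
  have hea : ⟪e₂, a⟫ = ((d:ℝ):ℂ) := by
    have h2 : a = lam • b + (a - lam • b) := by abel
    have he2b : ⟪e₂, b⟫ = 0 := by
      rw [← inner_conj_symm e₂ b, hbe2, map_zero]
    conv_lhs => rw [h2]
    rw [inner_add_right, inner_smul_right, he2b, mul_zero, zero_add, he2w, hd]
  obtain ⟨u, hu, hmu⟩ := exists_phase ⟪e₁, a⟫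
  have hmual : ‖⟪e₁, a⟫‖ = al := by
    have hBn : ‖((B:ℂ))^2‖ = B^2 := by
      rw [norm_pow, Complex.norm_real, Real.norm_eq_abs, abs_of_pos hBpos]
    have h1 : ⟪e₁, a⟫ = ((B:ℂ))⁻¹ * ⟪b, a⟫ := by
      rw [he1def, inner_smul_left, map_inv₀, Complex.conj_ofReal, ← hB]
    have h2 : ‖⟪b, a⟫‖ = ‖lam‖ * B^2 := by
      rw [hba, norm_mul, hBn]
    rw [h1, norm_mul, norm_inv, Complex.norm_real, Real.norm_eq_abs, abs_of_pos hBpos,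
      h2, hal]
    field_simp
  rw [hmual] at hmu
  obtain ⟨x, y, hx, hy, hxy, hnval⟩ := witness a b al d q p B ‖a‖ e₁ e₂ u he1 he2 h12
    hb1 hbe2 hu hmu hea C S hC hS hCS hq0 hp0 hqp hal0 hd0 hBpos.le hval
  have hgoal : (‖a‖ * B + q * (al * B)) / 2 + p / 2 * B * d = M := by rw [hM]; ring
  rw [hab, hinf, hgoal]
  unfold qRad
  apply le_antisymm
  · exact Real.sSup_le hub hM0
  · apply le_csSup ⟨M, hub⟩
    refine ⟨x, y, hx, hy, hxy, ?_⟩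
    rw [rankOne_inner, hM]
    linarith
end

section
/- For every bounded linear operator A on H and every q ∈ [0,1], the q-numerical radius satisfies ω_q(A) = sup{ q·|⟨Ay,y⟩| + √(1−q²)·|⟨At,y⟩| : y, t ∈ H, ‖y‖ = ‖t‖ = 1, ⟨t,y⟩ = 0 }. -/
open scoped ComplexInnerProductSpace

theorem phase_align (c d : ℂ) (q s : ℝ) (hq : 0 ≤ q) (hs : 0 ≤ s) :
    ∃ β : ℂ, ‖β‖ = 1 ∧ ‖(q:ℂ) * c + (s:ℂ) * (starRingEnd ℂ β) * d‖ = q * ‖c‖ + s * ‖d‖ := by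
  set u : ℂ := if c = 0 then 1 else c / ‖c‖ with hu
  have hu1 : ‖u‖ = 1 := by
    rw [hu]; split_ifs with h
    · simp
    · rw [norm_div, Complex.norm_real, norm_norm, div_self (norm_ne_zero_iff.mpr h)]
  refine ⟨if d = 0 then 1 else (d / ‖d‖) * (starRingEnd ℂ) u, ?_, ?_⟩
  · split_ifs with h
    · simp
    · rw [norm_mul, norm_div, Complex.norm_real, norm_norm,
        div_self (norm_ne_zero_iff.mpr h), RCLike.norm_conj, hu1, one_mul]
  · have key : (q:ℂ) * c + (s:ℂ) * (starRingEnd ℂ (if d = 0 then 1 else (d / ‖d‖) * (starRingEnd ℂ) u)) * d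
        = ((q * ‖c‖ + s * ‖d‖ : ℝ) : ℂ) * u := by
      have hc : (q:ℂ) * c = (q:ℂ) * ‖c‖ * u := by
        rw [hu]; split_ifs with h
        · simp [h]
        · have hcn : ((‖c‖ : ℂ)) ≠ 0 := by simpa using norm_ne_zero_iff.mpr h
          rw [mul_assoc, mul_comm ((‖c‖:ℂ)), div_mul_cancel₀ _ hcn]
      have hd : (s:ℂ) * (starRingEnd ℂ (if d = 0 then 1 else (d / ‖d‖) * (starRingEnd ℂ) u)) * d
          = (s:ℂ) * ‖d‖ * u := by
        split_ifs with h
        · simp [h]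
        · have hdn : ((‖d‖ : ℝ) : ℂ) ≠ 0 := by
            simpa using h
          have hdd : (starRingEnd ℂ) d * d = ((‖d‖ : ℂ))^2 := by
            rw [Complex.conj_mul']
          rw [map_mul, RingHomCompTriple.comp_apply, RingHom.id_apply, map_div₀,
            Complex.conj_ofReal]
          field_simp
          linear_combination ((s:ℂ) * u) * hdd
      rw [hc, hd]; push_cast; ring
    rw [key, norm_mul, hu1, mul_one, Complex.norm_real, Real.norm_eq_abs,
      abs_of_nonneg (by positivity)]

theorem exists_orth {H : Type*} [NormedAddCommGroup H] [InnerProductSpace ℂ H] [CompleteSpace H]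
    (hdim : 2 ≤ Module.rank ℂ H) (y : H) : ∃ t : H, ‖t‖ = 1 ∧ ⟪t, y⟫ = 0 := by
  have hK : (ℂ ∙ y)ᗮ ≠ ⊥ := by
    intro h
    have ht := (Submodule.orthogonal_eq_bot_iff).mp h
    have h1 : Module.rank ℂ (ℂ ∙ y) ≤ 1 := by
      simpa using rank_span_le (R := ℂ) ({y} : Set H)
    rw [ht, rank_top] at h1
    exact absurd (hdim.trans h1) (by norm_num)
  obtain ⟨v, hv, hv0⟩ := Submodule.exists_mem_ne_zero_of_ne_bot hK
  have hvy : ⟪v, y⟫ = 0 :=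
    inner_eq_zero_symm.mpr (hv y (Submodule.mem_span_singleton_self y))
  refine ⟨‖v‖⁻¹ • v, ?_, ?_⟩
  · simp [norm_smul, norm_ne_zero_iff.mpr hv0]
  · rw [show ‖v‖⁻¹ • v = ((‖v‖⁻¹ : ℝ) : ℂ) • v from (Complex.coe_smul _ _).symm, inner_smul_left, hvy, mul_zero]

theorem construct_x {H : Type*} [NormedAddCommGroup H] [InnerProductSpace ℂ H]
    (A : H →L[ℂ] H) (q s : ℝ) (hq : 0 ≤ q) (hs : 0 ≤ s) (hqs : q^2 + s^2 = 1)
    (y t : H) (hy : ‖y‖ = 1) (ht : ‖t‖ = 1) (hty : ⟪t, y⟫ = 0) :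
    ∃ x : H, ‖x‖ = 1 ∧ ⟪x, y⟫ = (q : ℂ) ∧
      ‖⟪A x, y⟫‖ = q * ‖⟪A y, y⟫‖ + s * ‖⟪A t, y⟫‖ := by
  obtain ⟨β, hβ1, hβ⟩ := phase_align ⟪A y, y⟫ ⟪A t, y⟫ q s hq hs
  set x : H := (q : ℂ) • y + ((s : ℂ) * β) • t with hx
  have hyt : ⟪y, t⟫ = 0 := inner_eq_zero_symm.mpr hty
  have hyy : ⟪y, y⟫ = 1 := by
    rw [inner_self_eq_norm_sq_to_K, hy]; norm_num
  have hxy : ⟪x, y⟫ = (q : ℂ) := by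
    rw [hx, inner_add_left, inner_smul_left, inner_smul_left, hty, hyy,
      Complex.conj_ofReal, mul_zero, add_zero, mul_one]
  refine ⟨x, ?_, hxy, ?_⟩
  · have horth : ⟪(q : ℂ) • y, ((s : ℂ) * β) • t⟫ = 0 := by
      rw [inner_smul_left, inner_smul_right, hyt, mul_zero, mul_zero]
    have h2 := norm_add_sq_eq_norm_sq_add_norm_sq_of_inner_eq_zero _ _ horth
    rw [← hx] at h2
    have hn1 : ‖(q:ℂ) • y‖ = q := by
      rw [norm_smul, hy, Complex.norm_real, Real.norm_eq_abs, abs_of_nonneg hq, mul_one]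
    have hn2 : ‖((s:ℂ) * β) • t‖ = s := by
      rw [norm_smul, ht, norm_mul, Complex.norm_real, Real.norm_eq_abs,
        abs_of_nonneg hs, hβ1, mul_one, mul_one]
    rw [hn1, hn2] at h2
    nlinarith [norm_nonneg x, h2, hqs]
  · have hAx : ⟪A x, y⟫ = (q:ℂ) * ⟪A y, y⟫ + (s:ℂ) * (starRingEnd ℂ β) * ⟪A t, y⟫ := by
      rw [hx, map_add, map_smul, map_smul, inner_add_left, inner_smul_left,
        inner_smul_left, Complex.conj_ofReal, map_mul, Complex.conj_ofReal]
    rw [hAx, hβ]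

theorem decompose_x {H : Type*} [NormedAddCommGroup H] [InnerProductSpace ℂ H] [CompleteSpace H]
    (hdim : 2 ≤ Module.rank ℂ H) (A : H →L[ℂ] H) (q : ℝ) (hq0 : 0 ≤ q) (hq1 : q ≤ 1)
    (x y : H) (hx : ‖x‖ = 1) (hy : ‖y‖ = 1) (hxy : ⟪x, y⟫ = (q : ℂ)) :
    ∃ t : H, ‖t‖ = 1 ∧ ⟪t, y⟫ = 0 ∧
      ‖⟪A x, y⟫‖ ≤ q * ‖⟪A y, y⟫‖ + Real.sqrt (1 - q^2) * ‖⟪A t, y⟫‖ := by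
  set r : H := x - (q : ℂ) • y with hr
  have hyy : ⟪y, y⟫ = 1 := by
    rw [inner_self_eq_norm_sq_to_K, hy]; norm_num
  have hry : ⟪r, y⟫ = 0 := by
    rw [hr, inner_sub_left, inner_smul_left, hxy, hyy, Complex.conj_ofReal, mul_one, sub_self]
  have hrn : ‖r‖^2 = 1 - q^2 := by
    have h := norm_sub_sq (𝕜 := ℂ) x ((q : ℂ) • y)
    rw [← hr, inner_smul_right, hxy] at h
    have hre : RCLike.re ((q:ℂ) * (q:ℂ)) = q^2 := by
      norm_cast; simp [pow_two]
    rw [hre, norm_smul, hy, Complex.norm_real, Real.norm_eq_abs, abs_of_nonneg hq0] at h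
    rw [h, hx]; ring
  by_cases hr0 : r = 0
  · obtain ⟨t, ht1, hty⟩ := exists_orth hdim y
    have hq2 : 1 - q^2 = 0 := by
      rw [hr0] at hrn; simpa using hrn.symm
    have hxq : x = (q:ℂ) • y := by
      have := sub_eq_zero.mp (hr ▸ hr0)
      exact this
    refine ⟨t, ht1, hty, ?_⟩
    rw [hxq, map_smul, inner_smul_left, Complex.conj_ofReal, norm_mul,
      Complex.norm_real, Real.norm_eq_abs, abs_of_nonneg hq0, hq2, Real.sqrt_zero,
      zero_mul, add_zero]
  · have hrpos : 0 < ‖r‖ := norm_pos_iff.mpr hr0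
    set t : H := ((‖r‖⁻¹ : ℝ) : ℂ) • r with htdef
    have ht1 : ‖t‖ = 1 := by
      rw [htdef, norm_smul, Complex.norm_real, Real.norm_eq_abs,
        abs_of_nonneg (inv_nonneg.mpr hrpos.le), inv_mul_cancel₀ hrpos.ne']
    have hty : ⟪t, y⟫ = 0 := by
      rw [htdef, inner_smul_left, hry, mul_zero]
    refine ⟨t, ht1, hty, ?_⟩
    have hxeq : x = (q:ℂ) • y + ((‖r‖ : ℝ) : ℂ) • t := by
      rw [htdef, smul_smul]
      have : ((‖r‖ : ℝ) : ℂ) * ((‖r‖⁻¹ : ℝ) : ℂ) = 1 := by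
        norm_cast
        exact mul_inv_cancel₀ hrpos.ne'
      rw [this, one_smul, hr]
      abel
    have hAx : ⟪A x, y⟫ = (q:ℂ) * ⟪A y, y⟫ + ((‖r‖ : ℝ) : ℂ) * ⟪A t, y⟫ := by
      rw [hxeq, map_add, map_smul, map_smul, inner_add_left, inner_smul_left,
        inner_smul_left, Complex.conj_ofReal, Complex.conj_ofReal]
    have hrs : ‖r‖ = Real.sqrt (1 - q^2) := by
      rw [← hrn, Real.sqrt_sq hrpos.le]
    calc ‖⟪A x, y⟫‖ ≤ ‖(q:ℂ) * ⟪A y, y⟫‖ + ‖((‖r‖ : ℝ) : ℂ) * ⟪A t, y⟫‖ := by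
          rw [hAx]; exact norm_add_le _ _
      _ = q * ‖⟪A y, y⟫‖ + Real.sqrt (1 - q^2) * ‖⟪A t, y⟫‖ := by
          rw [norm_mul, norm_mul, Complex.norm_real, Complex.norm_real,
            Real.norm_eq_abs, Real.norm_eq_abs, abs_of_nonneg hq0,
            abs_of_nonneg hrpos.le, hrs]
/-- Reformulation of the `q`-numerical radius via orthonormal pairs. -/
theorem stmt17 {H : Type*} [NormedAddCommGroup H] [InnerProductSpace ℂ H] [CompleteSpace H]
    (hdim : 2 ≤ Module.rank ℂ H) (A : H →L[ℂ] H) (q : ℝ) (hq : q ∈ Set.Icc (0 : ℝ) 1) :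
    qRad q A =
      sSup {r : ℝ | ∃ y t : H, ‖y‖ = 1 ∧ ‖t‖ = 1 ∧ ⟪t, y⟫ = 0 ∧
        r = q * ‖⟪A y, y⟫‖ + Real.sqrt (1 - q ^ 2) * ‖⟪A t, y⟫‖} := by
  obtain ⟨hq0, hq1⟩ := hq
  have h1q : 0 ≤ 1 - q^2 := by nlinarith
  set s₀ : ℝ := Real.sqrt (1 - q^2) with hs₀def
  have hs₀ : 0 ≤ s₀ := Real.sqrt_nonneg _
  have hqs : q^2 + s₀^2 = 1 := by
    rw [hs₀def, Real.sq_sqrt h1q]; ring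
  obtain ⟨y₀, hy₀, -⟩ := exists_orth hdim 0
  obtain ⟨t₀, ht₀, ht₀y⟩ := exists_orth hdim y₀
  set S : Set ℝ := {r : ℝ | ∃ x y : H, ‖x‖ = 1 ∧ ‖y‖ = 1 ∧ ⟪x, y⟫ = (q : ℂ) ∧ r = ‖⟪A x, y⟫‖}
    with hSdef
  set T : Set ℝ := {r : ℝ | ∃ y t : H, ‖y‖ = 1 ∧ ‖t‖ = 1 ∧ ⟪t, y⟫ = 0 ∧
      r = q * ‖⟪A y, y⟫‖ + Real.sqrt (1 - q ^ 2) * ‖⟪A t, y⟫‖} with hTdef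
  have hTne : T.Nonempty :=
    ⟨_, y₀, t₀, hy₀, ht₀, ht₀y, rfl⟩
  obtain ⟨x₀, hx₀, hx₀y, hx₀eq⟩ := construct_x A q s₀ hq0 hs₀ hqs y₀ t₀ hy₀ ht₀ ht₀y
  have hSne : S.Nonempty := ⟨_, x₀, y₀, hx₀, hy₀, hx₀y, rfl⟩
  have hSbdd : BddAbove S := by
    refine ⟨‖A‖, ?_⟩
    rintro r ⟨x, y, hx, hy, -, rfl⟩
    calc ‖⟪A x, y⟫‖ ≤ ‖A x‖ * ‖y‖ := norm_inner_le_norm (𝕜 := ℂ) _ _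
      _ ≤ (‖A‖ * ‖x‖) * ‖y‖ := by gcongr; exact A.le_opNorm x
      _ = ‖A‖ := by rw [hx, hy]; ring
  have hbd : ∀ (u v : H), ‖u‖ = 1 → ‖v‖ = 1 → ‖⟪A u, v⟫‖ ≤ ‖A‖ := by
    intro u v hu hv
    calc ‖⟪A u, v⟫‖ ≤ ‖A u‖ * ‖v‖ := norm_inner_le_norm (𝕜 := ℂ) _ _
      _ ≤ (‖A‖ * ‖u‖) * ‖v‖ := by gcongr; exact A.le_opNorm u
      _ = ‖A‖ := by rw [hu, hv]; ring
  have hTbdd : BddAbove T := by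
    refine ⟨‖A‖ + ‖A‖, ?_⟩
    rintro r ⟨y, t, hy, ht, hty, rfl⟩
    have h1 : q * ‖⟪A y, y⟫‖ ≤ 1 * ‖A‖ := by
      have := hbd y y hy hy
      have h0 : (0:ℝ) ≤ ‖⟪A y, y⟫‖ := norm_nonneg _
      nlinarith
    have h2 : Real.sqrt (1 - q^2) * ‖⟪A t, y⟫‖ ≤ 1 * ‖A‖ := by
      have := hbd t y ht hy
      have hsle : Real.sqrt (1 - q^2) ≤ 1 := by
        exact Real.sqrt_le_one.mpr (by nlinarith)
      have h0 : (0:ℝ) ≤ ‖⟪A t, y⟫‖ := norm_nonneg _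
      nlinarith
    linarith
  rw [show qRad q A = sSup S from rfl]
  apply le_antisymm
  · refine csSup_le hSne ?_
    rintro r ⟨x, y, hx, hy, hxy, rfl⟩
    obtain ⟨t, ht, hty, hle⟩ := decompose_x hdim A q hq0 hq1 x y hx hy hxy
    exact hle.trans (le_csSup hTbdd ⟨y, t, hy, ht, hty, rfl⟩)
  · refine csSup_le hTne ?_
    rintro r ⟨y, t, hy, ht, hty, rfl⟩
    obtain ⟨x, hx, hxy, heq⟩ := construct_x A q s₀ hq0 hs₀ hqs y t hy ht hty
    exact le_csSup hSbdd ⟨x, y, hx, hy, hxy, heq.symm⟩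
end
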